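/- arXiv:math/9809107 — 2 statements merged into one kernel-verified Lean document; each statement's English description precedes it below -/
import Mathlib

section
/- Let ℓ be an odd prime and F a field of characteristic ℓ. There is no nondegenerate symmetric bilinear form f₀ on F² and no injective group homomorphism from the cyclic group of order ℓ into the group of f₀-preserving linear automorphisms of F². -/
/-- Over a field of characteristic an odd prime `ℓ`, there is no nondegenerate
symmetric bilinear form `f₀` on `F²` together with an injective homomorphism
of the cyclic group of order `ℓ` into the `f₀`-preserving automorphisms of `F²`. -/
theorem stmt_3 (ℓ : ℕ) [hp : Fact ℓ.Prime] (hodd : Odd ℓ)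
    (F : Type*) [Field F] [CharP F ℓ] :
    ¬ ∃ (f₀ : LinearMap.BilinForm F (Fin 2 → F))
        (φ : Multiplicative (ZMod ℓ) →* ((Fin 2 → F) ≃ₗ[F] (Fin 2 → F))),
      f₀.Nondegenerate ∧ f₀.IsSymm ∧ Function.Injective φ ∧
      ∀ z x y, f₀ (φ z x) (φ z y) = f₀ x y := by
  rintro ⟨f₀, φ, hnd, hsym, hinj, hpres⟩
  have hℓ1 : 1 < ℓ := hp.out.one_lt
  haveI : NeZero ℓ := ⟨hp.out.pos.ne'⟩
  set g : (Fin 2 → F) ≃ₗ[F] (Fin 2 → F) := φ (Multiplicative.ofAdd (1 : ZMod ℓ)) with hg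
  -- g has order dividing ℓ and g ≠ 1
  have hgl : g ^ ℓ = 1 := by
    rw [hg, ← map_pow, ← map_one φ]
    congr 1
    rw [← ofAdd_nsmul]
    simp
  have hg1 : g ≠ 1 := by
    intro h
    have h1 : Multiplicative.ofAdd (1 : ZMod ℓ) = 1 := hinj (by rw [← hg, h, map_one])
    have : (1 : ZMod ℓ) = 0 := h1
    exact one_ne_zero this
  -- pass to the endomorphism algebra
  set A : Module.End F (Fin 2 → F) := g.toLinearMap with hAdef
  have hA : A ^ ℓ = 1 := by
    refine LinearMap.ext fun x => ?_
    have h1 : (A ^ ℓ) x = (⇑g)^[ℓ] x := by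
      rw [Module.End.pow_apply]; rfl
    rw [h1, ← LinearEquiv.pow_apply, hgl]
    rfl
  set n : Module.End F (Fin 2 → F) := A - 1 with hndef
  have hnapp : ∀ x, n x = g x - x := by
    intro x; simp [hndef, hAdef]
  have hn0 : n ≠ 0 := by
    intro h
    apply hg1
    have : A = 1 := by rwa [sub_eq_zero] at h
    exact LinearEquiv.toLinearMap_injective this
  -- n ^ ℓ = 0 by Frobenius
  haveI : CharP (Module.End F (Fin 2 → F)) ℓ :=
    charP_of_injective_algebraMap' F (A := Module.End F (Fin 2 → F)) ℓ
  have hnl : n ^ ℓ = 0 := by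
    rw [hndef, sub_pow_char_of_commute _ (Commute.one_right A), hA, one_pow, sub_self]
  -- hence n ^ 2 = 0 since the space is 2-dimensional
  have hn2 : n ^ 2 = 0 := by
    have hnil : IsNilpotent n := ⟨ℓ, hnl⟩
    have hcp := hnil.charpoly_eq_X_pow_finrank
    have hfr : Module.finrank F (Fin 2 → F) = 2 := Module.finrank_fin_fun F
    have := n.aeval_self_charpoly
    rw [hcp, hfr, map_pow, Polynomial.aeval_X] at this
    exact this
  have hn2' : ∀ x, n (n x) = 0 := by
    intro x
    have : (n ^ 2) x = 0 := by rw [hn2]; rfl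
    rwa [sq, Module.End.mul_apply] at this
  -- basic identity from preservation of the form
  have hI : ∀ x y, f₀ (n x) y + f₀ x (n y) + f₀ (n x) (n y) = 0 := by
    intro x y
    have h := hpres (Multiplicative.ofAdd (1 : ZMod ℓ)) x y
    rw [← hg] at h
    have hx : (g x : Fin 2 → F) = x + n x := by rw [hnapp]; ring
    have hy : (g y : Fin 2 → F) = y + n y := by rw [hnapp]; ring
    rw [hx, hy] at h
    simp only [map_add, LinearMap.add_apply] at h
    linear_combination h
  have hnn : ∀ x y, f₀ (n x) (n y) = 0 := by
    intro x y
    have h := hI (n x) y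
    rw [hn2'] at h
    simpa using h
  have hskew : ∀ x y, f₀ (n x) y = - f₀ x (n y) := by
    intro x y
    have h := hI x y
    rw [hnn] at h
    linear_combination h
  -- pick w with v := n w ≠ 0
  have hex : ∃ w, n w ≠ 0 := by
    by_contra h
    push_neg at h
    exact hn0 (LinearMap.ext fun x => h x)
  obtain ⟨w, hw⟩ := hex
  set v : Fin 2 → F := n w with hv
  have h2ne : (2 : F) ≠ 0 := by
    intro h
    have : (ℓ : ℕ) ∣ 2 := by
      have := (CharP.cast_eq_zero_iff F ℓ 2).mp (by exact_mod_cast h)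
      exact this
    have : ℓ = 2 := (Nat.prime_dvd_prime_iff_eq hp.out Nat.prime_two).mp this
    rw [this] at hodd
    exact (by decide : ¬ Odd 2) hodd
  have hvw : f₀ v w = 0 := by
    have h := hskew w w
    have hsymm : f₀ w (n w) = f₀ (n w) w := by
      have := hsym.eq w (n w)
      simpa using this
    rw [hsymm] at h
    have h2 : 2 * f₀ (n w) w = 0 := by linear_combination h
    rcases mul_eq_zero.mp h2 with h' | h'
    · exact absurd h' h2ne
    · exact h'
  have hvv : f₀ v v = 0 := hnn w w
  -- v, w are linearly independent, hence span
  have hindep : LinearIndependent F ![v, w] := by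
    rw [LinearIndependent.pair_iff]
    intro s t hst
    have hnst : n (s • v + t • w) = t • v := by
      rw [map_add, map_smul, map_smul, hv, hn2', smul_zero, zero_add]
    rw [hst, map_zero] at hnst
    have ht : t = 0 := by
      rcases smul_eq_zero.mp hnst.symm with h | h
      · exact h
      · exact absurd h hw
    refine ⟨?_, ht⟩
    rw [ht, zero_smul, add_zero] at hst
    rcases smul_eq_zero.mp hst with h | h
    · exact h
    · exact absurd h hw
  have hspan : Submodule.span F (Set.range ![v, w]) = ⊤ :=
    hindep.span_eq_top_of_card_eq_finrank (by simp [Module.finrank_fin_fun])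
  have hall : ∀ y, f₀ v y = 0 := by
    intro y
    have hy : y ∈ Submodule.span F (Set.range ![v, w]) := by rw [hspan]; trivial
    induction hy using Submodule.span_induction with
    | mem a ha =>
        obtain ⟨i, rfl⟩ := ha
        fin_cases i
        · simpa using hvv
        · simpa using hvw
    | zero => simp
    | add a b _ _ ha hb => rw [map_add, ha, hb, add_zero]
    | smul c a _ ha => rw [map_smul, ha, smul_zero]
  exact hw (hnd.1 v hall)
end

section
/- Let ℓ ≥ 5 be a prime, O = Z_ℓ (the ℓ-adic integers), S a free Z_ℓ-module of finite rank, and A an automorphism of S of finite order such that (A − 1)² ∈ ℓ·End(S). Then A = 1. -/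
section MS14

variable {ℓ : ℕ} [hp : Fact ℓ.Prime] {S : Type*} [AddCommGroup S] [Module ℤ_[ℓ] S]
  [Module.Free ℤ_[ℓ] S] [Module.Finite ℤ_[ℓ] S]

private lemma MS14.cast_mul_eq_smul (n : ℕ) (x : Module.End ℤ_[ℓ] S) :
    (n : Module.End ℤ_[ℓ] S) * x = (n : ℤ_[ℓ]) • x := by
  rw [← nsmul_eq_mul, Nat.cast_smul_eq_nsmul]

private lemma MS14.pi_pow_cancel (m : ℕ) {x y : Module.End ℤ_[ℓ] S}
    (h : (ℓ : Module.End ℤ_[ℓ] S) ^ m * x = (ℓ : Module.End ℤ_[ℓ] S) ^ m * y) : x = y := by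
  rw [← Nat.cast_pow, MS14.cast_mul_eq_smul, MS14.cast_mul_eq_smul] at h
  have hne : ((ℓ ^ m : ℕ) : ℤ_[ℓ]) ≠ 0 :=
    Nat.cast_ne_zero.mpr (pow_ne_zero m hp.out.pos.ne')
  exact smul_right_injective _ hne h

private lemma MS14.padic_bound (c : ℤ_[ℓ]) (hc : c ≠ 0) :
    ∃ b : ℕ, ¬ ((ℓ : ℤ_[ℓ]) ^ b ∣ c) := by
  have h0 : ‖c‖ > 0 := norm_pos_iff.mpr hc
  obtain ⟨b, hb⟩ := exists_pow_lt_of_lt_one h0 (show ((ℓ : ℝ)⁻¹) < 1 by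
    rw [inv_lt_one_iff₀]; right; exact_mod_cast hp.out.one_lt)
  refine ⟨b, fun ⟨d, hd⟩ => ?_⟩
  have : ‖c‖ ≤ ((ℓ : ℝ)⁻¹) ^ b := by
    rw [hd, norm_mul, norm_pow, PadicInt.norm_p]
    calc ((ℓ : ℝ)⁻¹) ^ b * ‖d‖ ≤ ((ℓ : ℝ)⁻¹) ^ b * 1 :=
          mul_le_mul_of_nonneg_left (PadicInt.norm_le_one d) (by positivity)
      _ = _ := mul_one _
  linarith

/-- For nonzero `B` in `End S`, there is an exact power of `ℓ` dividing `B`. -/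
private lemma MS14.exists_val {B : Module.End ℤ_[ℓ] S} (hB : B ≠ 0) :
    ∃ a : ℕ, (ℓ : Module.End ℤ_[ℓ] S) ^ a ∣ B ∧ ¬ (ℓ : Module.End ℤ_[ℓ] S) ^ (a + 1) ∣ B := by
  have hbound : ∃ b : ℕ, ¬ (ℓ : Module.End ℤ_[ℓ] S) ^ b ∣ B := by
    let 𝓑 := Module.Free.chooseBasis ℤ_[ℓ] (Module.End ℤ_[ℓ] S)
    have : ∃ i, 𝓑.repr B i ≠ 0 := by
      by_contra h
      push_neg at h
      apply hB
      have : 𝓑.repr B = 0 := Finsupp.ext h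
      simpa using congrArg 𝓑.repr.symm this
    obtain ⟨i, hi⟩ := this
    obtain ⟨b, hb⟩ := MS14.padic_bound (𝓑.repr B i) hi
    refine ⟨b, fun ⟨d, hd⟩ => hb ⟨𝓑.repr d i, ?_⟩⟩
    rw [hd, ← Nat.cast_pow, MS14.cast_mul_eq_smul, map_smul]
    simp [Nat.cast_pow]
  classical
  obtain ⟨b, hb⟩ := hbound
  have hex : ∃ m, ¬ (ℓ : Module.End ℤ_[ℓ] S) ^ m ∣ B := ⟨b, hb⟩
  let m₀ := Nat.find hex
  have hm₀ : ¬ (ℓ : Module.End ℤ_[ℓ] S) ^ m₀ ∣ B := Nat.find_spec hex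
  have hm₀pos : m₀ ≠ 0 := by
    intro h
    apply hm₀
    rw [h, pow_zero]
    exact one_dvd _
  refine ⟨m₀ - 1, ?_, by rw [show m₀ - 1 + 1 = m₀ by omega]; exact hm₀⟩
  by_contra h
  exact absurd (Nat.find_min' hex h) (by omega)

private lemma MS14.pow_comm (x : Module.End ℤ_[ℓ] S) (n : ℕ) :
    Commute ((ℓ : Module.End ℤ_[ℓ] S) ^ n) x := (Nat.cast_commute ℓ x).pow_left n

/-- divisor from the left of a right factor -/
private lemma MS14.dvd_mul_left' {m : ℕ} {b : Module.End ℤ_[ℓ] S}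
    (h : (ℓ : Module.End ℤ_[ℓ] S) ^ m ∣ b) (c : Module.End ℤ_[ℓ] S) :
    (ℓ : Module.End ℤ_[ℓ] S) ^ m ∣ c * b := by
  obtain ⟨d, rfl⟩ := h
  exact ⟨c * d, by rw [← mul_assoc, ← (MS14.pow_comm c m).eq, mul_assoc]⟩

private lemma MS14.dvd_mul_dvd {m n : ℕ} {b c : Module.End ℤ_[ℓ] S}
    (hb : (ℓ : Module.End ℤ_[ℓ] S) ^ m ∣ b) (hc : (ℓ : Module.End ℤ_[ℓ] S) ^ n ∣ c) :
    (ℓ : Module.End ℤ_[ℓ] S) ^ (m + n) ∣ b * c := by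
  obtain ⟨d, rfl⟩ := hb
  obtain ⟨e, rfl⟩ := hc
  refine ⟨d * e, ?_⟩
  rw [pow_add, mul_assoc ((ℓ : Module.End ℤ_[ℓ] S) ^ m), mul_assoc, ← mul_assoc d,
    ← (MS14.pow_comm d n).eq, mul_assoc]

private lemma MS14.rearr (m : ℕ) (x y : Module.End ℤ_[ℓ] S) :
    (ℓ : Module.End ℤ_[ℓ] S) * ((ℓ : Module.End ℤ_[ℓ] S) ^ m * x)
      + (ℓ : Module.End ℤ_[ℓ] S) ^ (m + 2) * y
    = (ℓ : Module.End ℤ_[ℓ] S) ^ (m + 1) * (x + (ℓ : Module.End ℤ_[ℓ] S) * y) := by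
  have h1 : (ℓ : Module.End ℤ_[ℓ] S) * ((ℓ : Module.End ℤ_[ℓ] S) ^ m * x)
      = (ℓ : Module.End ℤ_[ℓ] S) ^ (m + 1) * x := by
    rw [← mul_assoc, ← pow_succ']
  have h2 : (ℓ : Module.End ℤ_[ℓ] S) ^ (m + 2) * y
      = (ℓ : Module.End ℤ_[ℓ] S) ^ (m + 1) * ((ℓ : Module.End ℤ_[ℓ] S) * y) := by
    rw [show m + 2 = (m + 1) + 1 by omega, pow_succ, mul_assoc]
  rw [mul_add, h1, h2]

/-- Core step: binomial expansion bound. -/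
private lemma MS14.step (hge : 5 ≤ ℓ) {B : Module.End ℤ_[ℓ] S} {a : ℕ}
    (h2 : (ℓ : Module.End ℤ_[ℓ] S) ^ (a + 1) ∣ B * B) :
    ∃ R : Module.End ℤ_[ℓ] S,
      (1 + B) ^ ℓ - 1 = (ℓ : Module.End ℤ_[ℓ] S) * B + (ℓ : Module.End ℤ_[ℓ] S) ^ (a + 2) * R := by
  have hexp : (B + 1) ^ ℓ = ∑ k ∈ Finset.range (ℓ + 1),
      B ^ k * 1 ^ (ℓ - k) * (ℓ.choose k : Module.End ℤ_[ℓ] S) :=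
    Commute.add_pow (Commute.one_right B) ℓ
  simp only [one_pow, mul_one] at hexp
  have hdvd : (ℓ : Module.End ℤ_[ℓ] S) ^ (a + 2) ∣
      ∑ k ∈ Finset.range (ℓ - 1), B ^ (k + 2) * (ℓ.choose (k + 2) : Module.End ℤ_[ℓ] S) := by
    refine Finset.dvd_sum fun k hk => ?_
    have hk' : k < ℓ - 1 := Finset.mem_range.mp hk
    have hBsq : (ℓ : Module.End ℤ_[ℓ] S) ^ (a + 1) ∣ B ^ (k + 2) := by
      have : B ^ (k + 2) = B ^ k * (B * B) := by
        rw [pow_add, pow_two]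
      rw [this]
      exact MS14.dvd_mul_left' h2 _
    by_cases hkl : k + 2 < ℓ
    · have hch : (ℓ : Module.End ℤ_[ℓ] S) ^ 1 ∣ (ℓ.choose (k + 2) : Module.End ℤ_[ℓ] S) := by
        rw [pow_one]
        exact_mod_cast Nat.cast_dvd_cast (α := Module.End ℤ_[ℓ] S)
          (hp.out.dvd_choose_self (by omega) hkl)
      have := MS14.dvd_mul_dvd hBsq hch
      rwa [show a + 1 + 1 = a + 2 by omega] at this
    · -- k + 2 = ℓ
      have hkeq : k + 2 = ℓ := by omega
      have h4 : (ℓ : Module.End ℤ_[ℓ] S) ^ (2 * (a + 1)) ∣ B ^ (k + 2) := by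
        have hrw : B ^ (k + 2) = B ^ (k - 2) * ((B * B) * (B * B)) := by
          have hbb : B * B = B ^ 2 := (pow_two B).symm
          rw [hbb, ← pow_add, ← pow_add]
          congr 1
          omega
        rw [hrw]
        have : (ℓ : Module.End ℤ_[ℓ] S) ^ ((a+1) + (a+1)) ∣ (B * B) * (B * B) :=
          MS14.dvd_mul_dvd h2 h2
        rw [show 2 * (a+1) = (a+1)+(a+1) by ring]
        exact MS14.dvd_mul_left' this _
      have : (ℓ : Module.End ℤ_[ℓ] S) ^ (a + 2) ∣ B ^ (k + 2) :=
        dvd_trans (pow_dvd_pow _ (by omega)) h4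
      exact this.mul_right _
  obtain ⟨R, hR⟩ := hdvd
  refine ⟨R, ?_⟩
  have hsplit : ∑ k ∈ Finset.range (ℓ + 1), B ^ k * (ℓ.choose k : Module.End ℤ_[ℓ] S)
      = (∑ k ∈ Finset.range (ℓ - 1), B ^ (k + 1 + 1) * (ℓ.choose (k + 1 + 1) : Module.End ℤ_[ℓ] S))
        + B ^ (0 + 1) * (ℓ.choose (0 + 1) : Module.End ℤ_[ℓ] S)
        + B ^ 0 * (ℓ.choose 0 : Module.End ℤ_[ℓ] S) := by
    rw [show ℓ + 1 = (ℓ - 1) + 1 + 1 by omega, Finset.sum_range_succ', Finset.sum_range_succ']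
  have hone : B ^ 0 * (ℓ.choose 0 : Module.End ℤ_[ℓ] S) = 1 := by simp
  have hlin : B ^ (0 + 1) * (ℓ.choose (0 + 1) : Module.End ℤ_[ℓ] S)
      = (ℓ : Module.End ℤ_[ℓ] S) * B := by
    simp [(Nat.cast_commute ℓ B).eq]
  have : (1 + B) ^ ℓ = (1 : Module.End ℤ_[ℓ] S)
      + ((ℓ : Module.End ℤ_[ℓ] S) * B + (ℓ : Module.End ℤ_[ℓ] S) ^ (a + 2) * R) := by
    rw [add_comm (1 : Module.End ℤ_[ℓ] S) B, hexp, hsplit, hone, hlin]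
    rw [show ∀ k, k + 1 + 1 = k + 2 from fun k => rfl] at *
    rw [hR]
    abel
  rw [this]
  abel

private lemma MS14.iterate (hge : 5 ≤ ℓ) {f : Module.End ℤ_[ℓ] S} {a : ℕ} {B₀ : Module.End ℤ_[ℓ] S}
    (hB : f - 1 = (ℓ : Module.End ℤ_[ℓ] S) ^ a * B₀) (hB0 : ¬ (ℓ : Module.End ℤ_[ℓ] S) ∣ B₀)
    (h2 : (ℓ : Module.End ℤ_[ℓ] S) ^ (a + 1) ∣ (f - 1) * (f - 1)) :
    ∀ k : ℕ, ∃ Bk : Module.End ℤ_[ℓ] S,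
      f ^ (ℓ ^ k) - 1 = (ℓ : Module.End ℤ_[ℓ] S) ^ (a + k) * Bk ∧
      ¬ (ℓ : Module.End ℤ_[ℓ] S) ∣ Bk ∧
      (ℓ : Module.End ℤ_[ℓ] S) ^ (a + k + 1) ∣ (f ^ (ℓ ^ k) - 1) * (f ^ (ℓ ^ k) - 1) := by
  intro k
  induction k with
  | zero => exact ⟨B₀, by simpa using hB, hB0, by simpa using h2⟩
  | succ k ih =>
    obtain ⟨Bk, hBk, hBk0, hBk2⟩ := ih
    set B := f ^ (ℓ ^ k) - 1 with hBdef
    obtain ⟨R, hR⟩ := MS14.step hge (a := a + k) hBk2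
    have h1B : (1 : Module.End ℤ_[ℓ] S) + B = f ^ (ℓ ^ k) := by rw [hBdef]; abel
    have hpow : (1 + B) ^ ℓ = f ^ (ℓ ^ (k + 1)) := by
      rw [h1B, ← pow_mul, ← pow_succ]
    rw [hpow] at hR
    have heq : f ^ (ℓ ^ (k + 1)) - 1
        = (ℓ : Module.End ℤ_[ℓ] S) ^ (a + (k + 1)) * (Bk + (ℓ : Module.End ℤ_[ℓ] S) * R) := by
      rw [hR, hBk, MS14.rearr]
      rw [show a + k + 1 = a + (k + 1) by omega]
    refine ⟨Bk + (ℓ : Module.End ℤ_[ℓ] S) * R, heq, ?_, ?_⟩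
    · intro hdvd
      exact hBk0 (by
        have : (ℓ : Module.End ℤ_[ℓ] S) ∣ Bk + (ℓ : Module.End ℤ_[ℓ] S) * R
            - (ℓ : Module.End ℤ_[ℓ] S) * R := dvd_sub hdvd (Dvd.intro _ rfl)
        simpa using this)
    · rw [heq]
      have := MS14.dvd_mul_dvd (b := (ℓ : Module.End ℤ_[ℓ] S) ^ (a + (k+1)) * (Bk + (ℓ : Module.End ℤ_[ℓ] S) * R))
        (c := (ℓ : Module.End ℤ_[ℓ] S) ^ (a + (k+1)) * (Bk + (ℓ : Module.End ℤ_[ℓ] S) * R))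
        (Dvd.intro _ rfl) (Dvd.intro _ rfl)
      exact dvd_trans (pow_dvd_pow _ (by omega)) this

private lemma MS14.coe_pow (A : S ≃ₗ[ℤ_[ℓ]] S) (n : ℕ) :
    ((A ^ n : S ≃ₗ[ℤ_[ℓ]] S) : S →ₗ[ℤ_[ℓ]] S) = ((A : S →ₗ[ℤ_[ℓ]] S)) ^ n := by
  induction n with
  | zero => rfl
  | succ k ih => rw [pow_succ, pow_succ, ← ih]; rfl

end MS14

/-- Unramified case of Minkowski–Serre rigidity: for a prime `ℓ ≥ 5`, a finite free
`ℤ_ℓ`-module `S`, and a finite-order automorphism `A` of `S` with `(A - 1)² S ⊆ ℓS`,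
we have `A = 1`. -/
theorem stmt_14 (ℓ : ℕ) [hp : Fact ℓ.Prime] (hge : 5 ≤ ℓ)
    (S : Type*) [AddCommGroup S] [Module ℤ_[ℓ] S] [Module.Free ℤ_[ℓ] S]
    [Module.Finite ℤ_[ℓ] S]
    (A : S ≃ₗ[ℤ_[ℓ]] S) (hA : IsOfFinOrder A)
    (hA2 : ∀ x : S, ∃ y : S,
      ((A.toLinearMap - LinearMap.id) ∘ₗ (A.toLinearMap - LinearMap.id)) x = (ℓ : ℤ_[ℓ]) • y) :
    A = LinearEquiv.refl ℤ_[ℓ] S := by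
  classical
  set f : Module.End ℤ_[ℓ] S := A.toLinearMap with hf
  set N : Module.End ℤ_[ℓ] S := f - 1 with hNdef
  have hNN : ∀ x : S, ∃ y : S, (N * N) x = (ℓ : ℤ_[ℓ]) • y := hA2
  by_cases hN : N = 0
  · have hf1 : f = 1 := by rwa [sub_eq_zero] at hN
    ext x
    show A x = x
    have : f x = (1 : Module.End ℤ_[ℓ] S) x := by rw [hf1]
    simpa [hf] using this
  · exfalso
    obtain ⟨a, ⟨B₀, hB₀⟩, hnot⟩ := MS14.exists_val hN
    have hB0 : ¬ (ℓ : Module.End ℤ_[ℓ] S) ∣ B₀ := by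
      rintro ⟨d, rfl⟩
      exact hnot ⟨d, by rw [hB₀, pow_succ, mul_assoc]⟩
    -- base divisibility of N*N
    have hπ : ((ℓ : ℤ_[ℓ])) ≠ 0 := Nat.cast_ne_zero.mpr hp.out.pos.ne'
    have h2 : (ℓ : Module.End ℤ_[ℓ] S) ^ (a + 1) ∣ N * N := by
      rcases Nat.eq_zero_or_pos a with ha | ha
      · -- build a global linear map C with N*N = ℓ • C
        choose g hg using hNN
        have hinj : ∀ {y z : S}, (ℓ : ℤ_[ℓ]) • y = (ℓ : ℤ_[ℓ]) • z → y = z :=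
          fun h => smul_right_injective S hπ h
        have gadd : ∀ x y, g (x + y) = g x + g y := by
          intro x y
          apply hinj
          rw [smul_add, ← hg, ← hg, ← hg, map_add]
        have gsmul : ∀ (c : ℤ_[ℓ]) x, g (c • x) = c • g x := by
          intro c x
          apply hinj
          rw [← hg, map_smul, hg, smul_comm]
        let C : Module.End ℤ_[ℓ] S :=
          { toFun := g, map_add' := gadd, map_smul' := gsmul }
        have hC : N * N = (ℓ : Module.End ℤ_[ℓ] S) * C := by
          rw [MS14.cast_mul_eq_smul]
          exact LinearMap.ext fun x => hg x
        rw [ha, zero_add, pow_one]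
        exact ⟨C, hC⟩
      · refine dvd_trans (pow_dvd_pow _ (show a + 1 ≤ a + a by omega)) ?_
        exact MS14.dvd_mul_dvd ⟨B₀, hB₀⟩ ⟨B₀, hB₀⟩
    have hiter := MS14.iterate hge hB₀ hB0 h2
    -- pigeonhole on powers of ℓ mod the order of A
    set n := orderOf A with hn
    have hnpos : 0 < n := hA.orderOf_pos
    haveI : NeZero n := ⟨hnpos.ne'⟩
    obtain ⟨j, k, hjk, hfjk⟩ :=
      Finite.exists_ne_map_eq_of_infinite (fun m : ℕ => ((ℓ : ZMod n)) ^ m)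
    wlog hlt : j < k generalizing j k
    · exact this k j hjk.symm hfjk.symm (by omega)
    have hmod : ℓ ^ j ≡ ℓ ^ k [MOD n] := by
      have : ((ℓ ^ j : ℕ) : ZMod n) = ((ℓ ^ k : ℕ) : ZMod n) := by
        push_cast
        exact hfjk
      exact (ZMod.natCast_eq_natCast_iff _ _ _).mp this
    have hApow : A ^ (ℓ ^ j) = A ^ (ℓ ^ k) := (pow_eq_pow_iff_modEq).mpr hmod
    have hfpow : f ^ (ℓ ^ j) = f ^ (ℓ ^ k) := by
      rw [hf, ← MS14.coe_pow, ← MS14.coe_pow, hApow]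
    obtain ⟨Bj, hBj, hBj0, -⟩ := hiter j
    obtain ⟨Bk, hBk, -, -⟩ := hiter k
    rw [hfpow, hBk] at hBj
    have hsplit : (ℓ : Module.End ℤ_[ℓ] S) ^ (a + k)
        = (ℓ : Module.End ℤ_[ℓ] S) ^ (a + j) * (ℓ : Module.End ℤ_[ℓ] S) ^ (k - j) := by
      rw [← pow_add]
      congr 1
      omega
    rw [hsplit, mul_assoc] at hBj
    have hBjeq : Bj = (ℓ : Module.End ℤ_[ℓ] S) ^ (k - j) * Bk :=
      (MS14.pi_pow_cancel (a + j) hBj).symm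
    apply hBj0
    rw [hBjeq, show k - j = (k - j - 1) + 1 by omega, pow_succ,
      (MS14.pow_comm (ℓ : Module.End ℤ_[ℓ] S) (k - j - 1)).eq, mul_assoc]
    exact Dvd.intro _ rfl
end
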